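/- Let G be a Garside group, r a natural number, p, q ∈ ℤ^r, and let a, c ∈ [p,q] be conjugate in G. Then there exist l ∈ ℕ, tuples v₀, v₁, …, v_l ∈ [p,q], and simple elements s₁, …, s_l ∈ S such that v₀ = a, v_l = c, and v_{i−1}^{s_i} = v_i for each i = 1, …, l. -/

import Mathlib

/-- A Garside structure on a group `G`: a submonoid `G⁺` of positive elements
together with a Garside element `Δ`, satisfying the Garside axioms. -/
structure GarsideStructure (G : Type*) [Group G] where
  /-- the monoid `G⁺` of positive elements -/
  pos : Submonoid G
  /-- the Garside element `Δ` -/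
  Δ : G
  delta_mem : Δ ∈ pos
  /-- `G⁺` is Noetherian -/
  noetherian : ∀ a ∈ pos, ∃ n : ℕ, ∀ l : List G,
    (∀ x ∈ l, x ∈ pos ∧ x ≠ 1) → l.prod = a → l.length ≤ n
  /-- any two elements of `G⁺` admit a least common right multiple (w.r.t. `≼`) -/
  lcm_right : ∀ a ∈ pos, ∀ b ∈ pos, ∃ m ∈ pos,
    a⁻¹ * m ∈ pos ∧ b⁻¹ * m ∈ pos ∧
      ∀ c ∈ pos, a⁻¹ * c ∈ pos → b⁻¹ * c ∈ pos → m⁻¹ * c ∈ pos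
  /-- any two elements of `G⁺` admit a least common left multiple (w.r.t. `≽`) -/
  lcm_left : ∀ a ∈ pos, ∀ b ∈ pos, ∃ m ∈ pos,
    m * a⁻¹ ∈ pos ∧ m * b⁻¹ ∈ pos ∧
      ∀ c ∈ pos, c * a⁻¹ ∈ pos → c * b⁻¹ ∈ pos → c * m⁻¹ ∈ pos
  /-- `G` is the group of fractions of `G⁺` -/
  fractions : ∀ g : G, ∃ a ∈ pos, ∃ b ∈ pos, g = a⁻¹ * b
  /-- `Δ` is balanced: its left divisors in `G⁺` coincide with its right divisors -/
  balanced : ∀ s ∈ pos, (s⁻¹ * Δ ∈ pos ↔ Δ * s⁻¹ ∈ pos)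
  /-- the set of simple elements (divisors of `Δ`) is finite -/
  simples_finite : {s : G | s ∈ pos ∧ s⁻¹ * Δ ∈ pos}.Finite
  /-- the simple elements generate `G⁺` -/
  simples_generate : Submonoid.closure {s : G | s ∈ pos ∧ s⁻¹ * Δ ∈ pos} = pos

namespace GarsideStructure

variable {G : Type*} [Group G]

/-- `a ≼ b` : left divisibility. -/
def LeftDvd (Γ : GarsideStructure G) (a b : G) : Prop := a⁻¹ * b ∈ Γ.pos

/-- `b ≽ a` : right divisibility. -/
def RightDvd (Γ : GarsideStructure G) (b a : G) : Prop := b * a⁻¹ ∈ Γ.pos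

/-- a simple element: a divisor of `Δ`. -/
def Simple (Γ : GarsideStructure G) (s : G) : Prop := s ∈ Γ.pos ∧ Γ.LeftDvd s Γ.Δ

/-- an atom of `G⁺`. -/
def Atom (Γ : GarsideStructure G) (a : G) : Prop :=
  a ∈ Γ.pos ∧ a ≠ 1 ∧ ∀ b ∈ Γ.pos, ∀ c ∈ Γ.pos, a = b * c → b = 1 ∨ c = 1

/-- the iterated automorphism `τ^k`, where `τ(x) = Δ⁻¹xΔ`; so `τ^k(x) = Δ^(-k) x Δ^k`. -/
def tau (Γ : GarsideStructure G) (k : ℤ) (x : G) : G := Γ.Δ ^ (-k) * x * Γ.Δ ^ k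

/-- `d` is the greatest common left divisor (`∧`) of `a` and `b`. -/
def IsLeftGcd (Γ : GarsideStructure G) (d a b : G) : Prop :=
  d ∈ Γ.pos ∧ Γ.LeftDvd d a ∧ Γ.LeftDvd d b ∧
    ∀ c ∈ Γ.pos, Γ.LeftDvd c a → Γ.LeftDvd c b → Γ.LeftDvd c d

/-- `d` is the greatest common right divisor (`⋀̃`) of `a` and `b`. -/
def IsRightGcd (Γ : GarsideStructure G) (d a b : G) : Prop :=
  d ∈ Γ.pos ∧ Γ.RightDvd a d ∧ Γ.RightDvd b d ∧
    ∀ c ∈ Γ.pos, Γ.RightDvd a c → Γ.RightDvd b c → Γ.RightDvd d c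

/-- membership of a tuple `a ∈ Gʳ` in the interval `[p,q]`:
`pᵢ ≤ inf aᵢ` (i.e. `Δ^pᵢ ≼ aᵢ`) and `sup aᵢ ≤ qᵢ` (i.e. `aᵢ ≼ Δ^qᵢ`) for all `i`. -/
def InInterval (Γ : GarsideStructure G) {r : ℕ} (p q : Fin r → ℤ) (a : Fin r → G) : Prop :=
  ∀ i, Γ.LeftDvd (Γ.Δ ^ (p i)) (a i) ∧ Γ.LeftDvd (a i) (Γ.Δ ^ (q i))

/-- `‖a‖`: the maximal number of atoms in an expression of `a` as a product of atoms. -/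
noncomputable def anorm (Γ : GarsideStructure G) (a : G) : ℕ :=
  sSup {n | ∃ l : List G, (∀ x ∈ l, Γ.Atom x) ∧ l.prod = a ∧ l.length = n}

end GarsideStructure


namespace Aux

variable {G : Type*} [Group G] (Γ : GarsideStructure G)

/-- the set of simples -/
def S : Set G := {s : G | s ∈ Γ.pos ∧ s⁻¹ * Γ.Δ ∈ Γ.pos}

lemma mem_pos_of_mem_closure {x : G} (hx : x ∈ Submonoid.closure (S Γ)) : x ∈ Γ.pos := by
  rw [S, Γ.simples_generate] at hx; exact hx

lemma mem_closure_of_mem_pos {x : G} (hx : x ∈ Γ.pos) : x ∈ Submonoid.closure (S Γ) := by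
  rw [S, Γ.simples_generate]; exact hx

/-- no nontrivial units -/
lemma eq_one_of_inv_mem {u : G} (hu : u ∈ Γ.pos) (hu' : u⁻¹ ∈ Γ.pos) : u = 1 := by
  by_contra h
  obtain ⟨n, hn⟩ := Γ.noetherian 1 (one_mem _)
  have := hn (List.replicate (n + 1) u ++ List.replicate (n + 1) u⁻¹)
    (by
      intro x hx
      rcases List.mem_append.1 hx with hx | hx <;> rw [List.eq_of_mem_replicate hx]
      · exact ⟨hu, h⟩
      · exact ⟨hu', by simpa using h⟩)
    (by simp [List.prod_replicate])
  simp at this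
  omega

lemma conj_delta_mem {x : G} (hx : x ∈ Γ.pos) : Γ.Δ⁻¹ * x * Γ.Δ ∈ Γ.pos := by
  induction mem_closure_of_mem_pos Γ hx using Submonoid.closure_induction with
  | mem s hs =>
      have ht : s⁻¹ * Γ.Δ ∈ Γ.pos := hs.2
      have htr : Γ.Δ * (s⁻¹ * Γ.Δ)⁻¹ ∈ Γ.pos := by
        have : Γ.Δ * (s⁻¹ * Γ.Δ)⁻¹ = s := by group
        rw [this]; exact hs.1
      have := (Γ.balanced _ ht).2 htr
      have heq : (s⁻¹ * Γ.Δ)⁻¹ * Γ.Δ = Γ.Δ⁻¹ * s * Γ.Δ := by group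
      rwa [heq] at this
  | one => simpa using one_mem Γ.pos
  | mul x y hx' hy' px py =>
      have : Γ.Δ⁻¹ * (x * y) * Γ.Δ = (Γ.Δ⁻¹ * x * Γ.Δ) * (Γ.Δ⁻¹ * y * Γ.Δ) := by group
      rw [this]; exact mul_mem (px (mem_pos_of_mem_closure Γ hx')) (py (mem_pos_of_mem_closure Γ hy'))

lemma conj_delta_inv_mem {x : G} (hx : x ∈ Γ.pos) : Γ.Δ * x * Γ.Δ⁻¹ ∈ Γ.pos := by
  induction mem_closure_of_mem_pos Γ hx using Submonoid.closure_induction with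
  | mem s hs =>
      -- t := Δ s⁻¹ ∈ pos by balanced; result Δ s Δ⁻¹ = Δ t⁻¹ ∈ pos by balanced t
      have ht : Γ.Δ * s⁻¹ ∈ Γ.pos := (Γ.balanced s hs.1).1 hs.2
      have ht2 : (Γ.Δ * s⁻¹)⁻¹ * Γ.Δ ∈ Γ.pos := by
        have : (Γ.Δ * s⁻¹)⁻¹ * Γ.Δ = s := by group
        rw [this]; exact hs.1
      have := (Γ.balanced _ ht).1 ht2
      have heq : Γ.Δ * (Γ.Δ * s⁻¹)⁻¹ = Γ.Δ * s * Γ.Δ⁻¹ := by group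
      rwa [heq] at this
  | one => simpa using one_mem Γ.pos
  | mul x y hx' hy' px py =>
      have : Γ.Δ * (x * y) * Γ.Δ⁻¹ = (Γ.Δ * x * Γ.Δ⁻¹) * (Γ.Δ * y * Γ.Δ⁻¹) := by group
      rw [this]; exact mul_mem (px (mem_pos_of_mem_closure Γ hx')) (py (mem_pos_of_mem_closure Γ hy'))

lemma tau_zpow_mem (k : ℤ) {x : G} (hx : x ∈ Γ.pos) : (Γ.Δ ^ k)⁻¹ * x * Γ.Δ ^ k ∈ Γ.pos := by
  induction k using Int.induction_on with
  | zero => simpa using hx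
  | succ i ih =>
      have : (Γ.Δ ^ ((i : ℤ) + 1))⁻¹ * x * Γ.Δ ^ ((i : ℤ) + 1)
          = Γ.Δ⁻¹ * ((Γ.Δ ^ (i : ℤ))⁻¹ * x * Γ.Δ ^ (i : ℤ)) * Γ.Δ := by group
      rw [this]; exact conj_delta_mem Γ ih
  | pred i ih =>
      have : (Γ.Δ ^ (-(i : ℤ) - 1))⁻¹ * x * Γ.Δ ^ (-(i : ℤ) - 1)
          = Γ.Δ * ((Γ.Δ ^ (-(i : ℤ)))⁻¹ * x * Γ.Δ ^ (-(i : ℤ))) * Γ.Δ⁻¹ := by group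
      rw [this]; exact conj_delta_inv_mem Γ ih

end Aux

namespace Aux

variable {G : Type*} [Group G] (Γ : GarsideStructure G)

lemma simple_conj {s : G} (hs : s ∈ S Γ) : Γ.Δ⁻¹ * s * Γ.Δ ∈ S Γ := by
  refine ⟨conj_delta_mem Γ hs.1, ?_⟩
  have : (Γ.Δ⁻¹ * s * Γ.Δ)⁻¹ * Γ.Δ = Γ.Δ⁻¹ * (s⁻¹ * Γ.Δ) * Γ.Δ := by group
  rw [this]; exact conj_delta_mem Γ hs.2

/-- conjugation commuting helper -/
lemma central_of_comm_simples (D : G) (hD : ∀ s ∈ S Γ, D * s = s * D) :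
    ∀ g : G, D * g = g * D := by
  have hpos : ∀ x ∈ Γ.pos, D * x = x * D := by
    intro x hx
    induction mem_closure_of_mem_pos Γ hx using Submonoid.closure_induction with
    | mem s hs => exact hD s hs
    | one => simp
    | mul x y hx' hy' px py =>
        have px' := px (mem_pos_of_mem_closure Γ hx')
        have py' := py (mem_pos_of_mem_closure Γ hy')
        calc D * (x * y) = (D * x) * y := by group
          _ = x * (D * y) := by rw [px']; group
          _ = x * y * D := by rw [py']; group
  intro g
  obtain ⟨u, hu, v, hv, rfl⟩ := Γ.fractions g
  have hu' := hpos u hu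
  have hv' := hpos v hv
  have huinv : D * u⁻¹ = u⁻¹ * D := by
    have h4 := congrArg (fun z => u⁻¹ * z * u⁻¹) hu'
    simpa [mul_assoc] using h4.symm
  calc D * (u⁻¹ * v) = (D * u⁻¹) * v := by group
    _ = u⁻¹ * (D * v) := by rw [huinv]; group
    _ = u⁻¹ * v * D := by rw [hv']; group

/-- some positive power of Δ is central -/
lemma delta_pow_central : ∃ n : ℕ, 0 < n ∧ ∀ g : G, Γ.Δ ^ n * g = g * Γ.Δ ^ n := by
  classical
  have hfin : Finite (S Γ) := Γ.simples_finite.to_subtype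
  set φ : S Γ → S Γ := fun s => ⟨Γ.Δ⁻¹ * s.1 * Γ.Δ, simple_conj Γ s.2⟩ with hφ
  have hinj : Function.Injective φ := by
    intro a b hab
    have h2 : Γ.Δ⁻¹ * a.1 * Γ.Δ = Γ.Δ⁻¹ * b.1 * Γ.Δ := congrArg Subtype.val hab
    exact Subtype.ext (mul_left_cancel (mul_right_cancel h2))
  have hiter : ∀ (m : ℕ) (s : S Γ), ((φ^[m]) s).1 = (Γ.Δ ^ m)⁻¹ * s.1 * Γ.Δ ^ m := by
    intro m
    induction m with
    | zero => intro s; simp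
    | succ m ih =>
        intro s
        rw [Function.iterate_succ_apply', hφ]
        simp only []
        rw [ih s, pow_succ]
        group
  obtain ⟨i, j, hne, hij⟩ := Finite.exists_ne_map_eq_of_infinite (fun m : ℕ => φ^[m])
  wlog hlt : j < i generalizing i j
  · exact this j i (Ne.symm hne) hij.symm (by omega)
  refine ⟨i - j, by omega, ?_⟩
  have hit : ∀ s : S Γ, φ^[i - j] s = s := by
    intro s
    have h1 : φ^[j] (φ^[i - j] s) = φ^[j] s := by
      rw [← Function.iterate_add_apply]
      have hj : j + (i - j) = i := by omega
      rw [hj]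
      exact congrFun hij s
    exact hinj.iterate j h1
  apply central_of_comm_simples Γ (Γ.Δ ^ (i - j))
  intro s hs
  have hfix : (Γ.Δ ^ (i - j))⁻¹ * s * Γ.Δ ^ (i - j) = s := by
    have := congrArg Subtype.val (hit ⟨s, hs⟩)
    rwa [hiter] at this
  have h4 := congrArg (fun z => Γ.Δ ^ (i - j) * z) hfix
  rw [show Γ.Δ ^ (i - j) * ((Γ.Δ ^ (i - j))⁻¹ * s * Γ.Δ ^ (i - j)) = s * Γ.Δ ^ (i - j) from by
    group] at h4
  exact h4.symm

/-- every positive element left-divides some power of Δ -/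
lemma dvd_delta_pow {u : G} (hu : u ∈ Γ.pos) : ∃ K : ℕ, u⁻¹ * Γ.Δ ^ K ∈ Γ.pos := by
  induction mem_closure_of_mem_pos Γ hu using Submonoid.closure_induction with
  | mem s hs => exact ⟨1, by simpa using hs.2⟩
  | one => exact ⟨0, by simpa using one_mem Γ.pos⟩
  | mul x y hx' hy' px py =>
      obtain ⟨Kx, hKx⟩ := px (mem_pos_of_mem_closure Γ hx')
      obtain ⟨Ky, hKy⟩ := py (mem_pos_of_mem_closure Γ hy')
      refine ⟨Kx + Ky, ?_⟩
      have : (x * y)⁻¹ * Γ.Δ ^ (Kx + Ky)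
          = (y⁻¹ * Γ.Δ ^ Ky) * ((Γ.Δ ^ Ky)⁻¹ * (x⁻¹ * Γ.Δ ^ Kx) * Γ.Δ ^ Ky) := by
        rw [pow_add]; group
      rw [this]
      exact mul_mem hKy (by simpa [zpow_natCast] using tau_zpow_mem Γ (Ky : ℤ) hKx)

lemma dvd_delta_pow_mono {u : G} {K K' : ℕ} (hK : u⁻¹ * Γ.Δ ^ K ∈ Γ.pos) (h : K ≤ K') :
    u⁻¹ * Γ.Δ ^ K' ∈ Γ.pos := by
  have : u⁻¹ * Γ.Δ ^ K' = (u⁻¹ * Γ.Δ ^ K) * Γ.Δ ^ (K' - K) := by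
    rw [mul_assoc, ← pow_add]; congr 2; omega
  rw [this]
  exact mul_mem hK (pow_mem Γ.delta_mem _)

end Aux

namespace Aux

variable {G : Type*} [Group G] (Γ : GarsideStructure G)

/-- the set of factorization lengths -/
def lenSet (a : G) : Set ℕ :=
  {n | ∃ l : List G, (∀ x ∈ l, x ∈ Γ.pos ∧ x ≠ 1) ∧ l.prod = a ∧ l.length = n}

noncomputable def len (a : G) : ℕ := sSup (lenSet Γ a)

lemma lenSet_nonempty {a : G} (ha : a ∈ Γ.pos) : (lenSet Γ a).Nonempty := by
  by_cases h : a = 1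
  · exact ⟨0, [], by simp, by simp [h], rfl⟩
  · exact ⟨1, [a], by simp [ha, h], by simp, rfl⟩

lemma lenSet_bdd {a : G} (ha : a ∈ Γ.pos) : BddAbove (lenSet Γ a) := by
  obtain ⟨n, hn⟩ := Γ.noetherian a ha
  exact ⟨n, fun m hm => by obtain ⟨l, hl, hprod, hlen⟩ := hm; exact hlen ▸ hn l hl hprod⟩

lemma len_mem {a : G} (ha : a ∈ Γ.pos) : len Γ a ∈ lenSet Γ a :=
  Nat.sSup_mem (lenSet_nonempty Γ ha) (lenSet_bdd Γ ha)

lemma le_len {a : G} (ha : a ∈ Γ.pos) {n : ℕ} (hn : n ∈ lenSet Γ a) : n ≤ len Γ a :=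
  le_csSup (lenSet_bdd Γ ha) hn

lemma len_add_le {a b : G} (ha : a ∈ Γ.pos) (hb : b ∈ Γ.pos) :
    len Γ a + len Γ b ≤ len Γ (a * b) := by
  obtain ⟨la, hla, hpa, hna⟩ := len_mem Γ ha
  obtain ⟨lb, hlb, hpb, hnb⟩ := len_mem Γ hb
  apply le_len Γ (mul_mem ha hb)
  exact ⟨la ++ lb, by
    intro x hx
    rcases List.mem_append.1 hx with h | h
    · exact hla x h
    · exact hlb x h, by simp [hpa, hpb], by simp [hna, hnb]⟩

lemma one_le_len {a : G} (ha : a ∈ Γ.pos) (h : a ≠ 1) : 1 ≤ len Γ a :=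
  le_len Γ ha ⟨[a], by simp [ha, h], by simp, rfl⟩

lemma len_lt_of_dvd {s x : G} (hs : s ∈ Γ.pos) (h1 : s ≠ 1) (hsx : s⁻¹ * x ∈ Γ.pos) :
    len Γ (s⁻¹ * x) < len Γ x := by
  have key := len_add_le Γ hs hsx
  rw [show s * (s⁻¹ * x) = x from by group] at key
  have := one_le_len Γ hs h1
  omega

lemma len_le_of_dvd {c a : G} (hc : c ∈ Γ.pos) (ha : a ∈ Γ.pos) (h : c⁻¹ * a ∈ Γ.pos) :
    len Γ c ≤ len Γ a := by
  have key := len_add_le Γ hc h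
  rw [show c * (c⁻¹ * a) = a from by group] at key
  omega

/-- existence of left gcds -/
lemma exists_leftGcd {a b : G} (ha : a ∈ Γ.pos) (hb : b ∈ Γ.pos) :
    ∃ d, Γ.IsLeftGcd d a b := by
  classical
  set D : Set G := {c | c ∈ Γ.pos ∧ c⁻¹ * a ∈ Γ.pos ∧ c⁻¹ * b ∈ Γ.pos} with hD
  have h1D : (1 : G) ∈ D := ⟨one_mem _, by simpa using ha, by simpa using hb⟩
  set L : Set ℕ := len Γ '' D with hL
  have hLne : L.Nonempty := ⟨len Γ 1, 1, h1D, rfl⟩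
  have hLbdd : BddAbove L := by
    refine ⟨len Γ a, ?_⟩
    rintro n ⟨c, hc, rfl⟩
    exact len_le_of_dvd Γ hc.1 ha hc.2.1
  obtain ⟨d, hd, hdlen⟩ := Nat.sSup_mem hLne hLbdd
  refine ⟨d, hd.1, hd.2.1, hd.2.2, ?_⟩
  intro c hc hca hcb
  obtain ⟨m, hm, hdm, hcm, hmin⟩ := Γ.lcm_right d hd.1 c hc
  have hmD : m ∈ D := ⟨hm, hmin a ha hd.2.1 hca, hmin b hb hd.2.2 hcb⟩
  have hlenm : len Γ m ≤ sSup L := le_csSup hLbdd ⟨m, hmD, rfl⟩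
  have heq : d⁻¹ * m = 1 := by
    by_contra hne
    have := len_add_le Γ hd.1 hdm
    rw [show d * (d⁻¹ * m) = m from by group] at this
    have h1 := one_le_len Γ hdm hne
    omega
  have : m = d := by
    have := congrArg (fun z => d * z) heq
    simpa [mul_assoc] using this
  show c⁻¹ * d ∈ Γ.pos
  rw [← this]
  exact hcm

/-- any nontrivial positive element has a nontrivial simple left divisor -/
lemma exists_simple_dvd {x : G} (hx : x ∈ Γ.pos) (h1 : x ≠ 1) :
    ∃ s ∈ S Γ, s ≠ 1 ∧ s⁻¹ * x ∈ Γ.pos := by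
  have main : ∀ y ∈ Γ.pos, y = 1 ∨ ∃ s ∈ S Γ, s ≠ 1 ∧ s⁻¹ * y ∈ Γ.pos := by
    intro y hy
    induction mem_closure_of_mem_pos Γ hy using Submonoid.closure_induction with
    | mem s hs =>
        by_cases h : s = 1
        · exact Or.inl h
        · exact Or.inr ⟨s, hs, h, by simpa using one_mem Γ.pos⟩
    | one => exact Or.inl rfl
    | mul u v hu' hv' pu pv =>
        have hum := mem_pos_of_mem_closure Γ hu'
        have hvm := mem_pos_of_mem_closure Γ hv'
        rcases pu hum with h | ⟨s, hsS, hs1, hsu⟩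
        · rcases pv hvm with h' | ⟨s, hsS, hs1, hsv⟩
          · exact Or.inl (by rw [h, h']; simp)
          · exact Or.inr ⟨s, hsS, hs1, by rwa [h, one_mul]⟩
        · refine Or.inr ⟨s, hsS, hs1, ?_⟩
          rw [show s⁻¹ * (u * v) = (s⁻¹ * u) * v from by group]
          exact mul_mem hsu hvm
  rcases main x hx with h | h
  · exact absurd h h1
  · exact h

end Aux

namespace Aux

variable {G : Type*} [Group G] (Γ : GarsideStructure G)

lemma gcd_cond_inf (p : ℤ) {a x d : G}
    (ha : (Γ.Δ ^ p)⁻¹ * a ∈ Γ.pos) (hx : x ∈ Γ.pos) (hgcd : Γ.IsLeftGcd d x Γ.Δ)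
    (hP : (Γ.Δ ^ p)⁻¹ * (x⁻¹ * a * x) ∈ Γ.pos) :
    (Γ.Δ ^ p)⁻¹ * (d⁻¹ * a * d) ∈ Γ.pos := by
  obtain ⟨hd, hdx', hdΔ', huniv⟩ := hgcd
  have hdx : d⁻¹ * x ∈ Γ.pos := hdx'
  have hdΔ : d⁻¹ * Γ.Δ ∈ Γ.pos := hdΔ'
  have hA : (Γ.Δ ^ p)⁻¹ * a ∈ Γ.pos := ha
  obtain ⟨m, hgcdm⟩ := exists_leftGcd Γ (mul_mem hA hx) (mul_mem hA Γ.delta_mem)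
  obtain ⟨hm, hmAx', hmAΔ', muniv⟩ := hgcdm
  have hmAx : m⁻¹ * ((Γ.Δ ^ p)⁻¹ * a * x) ∈ Γ.pos := hmAx'
  have hmAΔ : m⁻¹ * ((Γ.Δ ^ p)⁻¹ * a * Γ.Δ) ∈ Γ.pos := hmAΔ'
  -- τ_p(d) divides A*x
  have step1 : ((Γ.Δ ^ p)⁻¹ * d * Γ.Δ ^ p)⁻¹ * ((Γ.Δ ^ p)⁻¹ * a * x) ∈ Γ.pos := by
    have hid : ((Γ.Δ ^ p)⁻¹ * d * Γ.Δ ^ p)⁻¹ * ((Γ.Δ ^ p)⁻¹ * a * x)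
        = ((Γ.Δ ^ p)⁻¹ * (d⁻¹ * x) * Γ.Δ ^ p) * ((Γ.Δ ^ p)⁻¹ * (x⁻¹ * a * x)) := by group
    rw [hid]
    exact mul_mem (tau_zpow_mem Γ p hdx) hP
  -- τ_p(d) divides A*Δ
  have step2 : ((Γ.Δ ^ p)⁻¹ * d * Γ.Δ ^ p)⁻¹ * ((Γ.Δ ^ p)⁻¹ * a * Γ.Δ) ∈ Γ.pos := by
    have hid : ((Γ.Δ ^ p)⁻¹ * d * Γ.Δ ^ p)⁻¹ * ((Γ.Δ ^ p)⁻¹ * a * Γ.Δ)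
        = ((Γ.Δ ^ p)⁻¹ * (d⁻¹ * Γ.Δ) * Γ.Δ ^ p) * (Γ.Δ⁻¹ * ((Γ.Δ ^ p)⁻¹ * a) * Γ.Δ) := by group
    rw [hid]
    exact mul_mem (tau_zpow_mem Γ p hdΔ) (conj_delta_mem Γ hA)
  have hτm : ((Γ.Δ ^ p)⁻¹ * d * Γ.Δ ^ p)⁻¹ * m ∈ Γ.pos := by
    apply muniv _ (tau_zpow_mem Γ p hd)
    · exact step1
    · exact step2
  have hAm : ((Γ.Δ ^ p)⁻¹ * a)⁻¹ * m ∈ Γ.pos := by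
    apply muniv _ hA
    · show ((Γ.Δ ^ p)⁻¹ * a)⁻¹ * ((Γ.Δ ^ p)⁻¹ * a * x) ∈ Γ.pos
      rw [show ((Γ.Δ ^ p)⁻¹ * a)⁻¹ * ((Γ.Δ ^ p)⁻¹ * a * x) = x from by group]
      exact hx
    · show ((Γ.Δ ^ p)⁻¹ * a)⁻¹ * ((Γ.Δ ^ p)⁻¹ * a * Γ.Δ) ∈ Γ.pos
      rw [show ((Γ.Δ ^ p)⁻¹ * a)⁻¹ * ((Γ.Δ ^ p)⁻¹ * a * Γ.Δ) = Γ.Δ from by group]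
      exact Γ.delta_mem
  -- e := A⁻¹ m divides x and Δ, hence divides d
  have hex : (((Γ.Δ ^ p)⁻¹ * a)⁻¹ * m)⁻¹ * x ∈ Γ.pos := by
    rw [show (((Γ.Δ ^ p)⁻¹ * a)⁻¹ * m)⁻¹ * x = m⁻¹ * ((Γ.Δ ^ p)⁻¹ * a * x) from by group]
    exact hmAx
  have heΔ : (((Γ.Δ ^ p)⁻¹ * a)⁻¹ * m)⁻¹ * Γ.Δ ∈ Γ.pos := by
    rw [show (((Γ.Δ ^ p)⁻¹ * a)⁻¹ * m)⁻¹ * Γ.Δ = m⁻¹ * ((Γ.Δ ^ p)⁻¹ * a * Γ.Δ) from by group]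
    exact hmAΔ
  have hed : (((Γ.Δ ^ p)⁻¹ * a)⁻¹ * m)⁻¹ * d ∈ Γ.pos := huniv _ hAm hex heΔ
  have hfinal : (Γ.Δ ^ p)⁻¹ * (d⁻¹ * a * d)
      = (((Γ.Δ ^ p)⁻¹ * d * Γ.Δ ^ p)⁻¹ * m) * ((((Γ.Δ ^ p)⁻¹ * a)⁻¹ * m)⁻¹ * d) := by group
  rw [hfinal]
  exact mul_mem hτm hed

lemma gcd_cond_sup (q : ℤ) {a x d : G}
    (hq : a⁻¹ * Γ.Δ ^ q ∈ Γ.pos) (hx : x ∈ Γ.pos) (hgcd : Γ.IsLeftGcd d x Γ.Δ)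
    (hQ : (x⁻¹ * a * x)⁻¹ * Γ.Δ ^ q ∈ Γ.pos) :
    (d⁻¹ * a * d)⁻¹ * Γ.Δ ^ q ∈ Γ.pos := by
  obtain ⟨hd, hdx', hdΔ', huniv⟩ := hgcd
  have hdx : d⁻¹ * x ∈ Γ.pos := hdx'
  have hdΔ : d⁻¹ * Γ.Δ ∈ Γ.pos := hdΔ'
  have hC : a⁻¹ * Γ.Δ ^ q ∈ Γ.pos := hq
  have hτx : (Γ.Δ ^ q)⁻¹ * x * Γ.Δ ^ q ∈ Γ.pos := tau_zpow_mem Γ q hx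
  obtain ⟨m, hgcdm⟩ := exists_leftGcd Γ (mul_mem hC hτx) (mul_mem hC Γ.delta_mem)
  obtain ⟨hm, hmCx', hmCΔ', muniv⟩ := hgcdm
  have hmCx : m⁻¹ * (a⁻¹ * Γ.Δ ^ q * ((Γ.Δ ^ q)⁻¹ * x * Γ.Δ ^ q)) ∈ Γ.pos := hmCx'
  have hmCΔ : m⁻¹ * (a⁻¹ * Γ.Δ ^ q * Γ.Δ) ∈ Γ.pos := hmCΔ'
  -- d divides C * τ_q(x) and C * Δ, hence divides m
  have hdm : d⁻¹ * m ∈ Γ.pos := by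
    apply muniv _ hd
    · show d⁻¹ * (a⁻¹ * Γ.Δ ^ q * ((Γ.Δ ^ q)⁻¹ * x * Γ.Δ ^ q)) ∈ Γ.pos
      rw [show d⁻¹ * (a⁻¹ * Γ.Δ ^ q * ((Γ.Δ ^ q)⁻¹ * x * Γ.Δ ^ q))
          = (d⁻¹ * x) * ((x⁻¹ * a * x)⁻¹ * Γ.Δ ^ q) from by group]
      exact mul_mem hdx hQ
    · show d⁻¹ * (a⁻¹ * Γ.Δ ^ q * Γ.Δ) ∈ Γ.pos
      rw [show d⁻¹ * (a⁻¹ * Γ.Δ ^ q * Γ.Δ)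
          = (d⁻¹ * Γ.Δ) * (Γ.Δ⁻¹ * (a⁻¹ * Γ.Δ ^ q) * Γ.Δ) from by group]
      exact mul_mem hdΔ (conj_delta_mem Γ hC)
  -- C divides both, so e := C⁻¹ m is positive and divides τ_q(x) and Δ
  have hCm : (a⁻¹ * Γ.Δ ^ q)⁻¹ * m ∈ Γ.pos := by
    apply muniv _ hC
    · show (a⁻¹ * Γ.Δ ^ q)⁻¹ * (a⁻¹ * Γ.Δ ^ q * ((Γ.Δ ^ q)⁻¹ * x * Γ.Δ ^ q)) ∈ Γ.pos
      rw [show (a⁻¹ * Γ.Δ ^ q)⁻¹ * (a⁻¹ * Γ.Δ ^ q * ((Γ.Δ ^ q)⁻¹ * x * Γ.Δ ^ q))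
          = (Γ.Δ ^ q)⁻¹ * x * Γ.Δ ^ q from by group]
      exact hτx
    · show (a⁻¹ * Γ.Δ ^ q)⁻¹ * (a⁻¹ * Γ.Δ ^ q * Γ.Δ) ∈ Γ.pos
      rw [show (a⁻¹ * Γ.Δ ^ q)⁻¹ * (a⁻¹ * Γ.Δ ^ q * Γ.Δ) = Γ.Δ from by group]
      exact Γ.delta_mem
  have hetx : ((a⁻¹ * Γ.Δ ^ q)⁻¹ * m)⁻¹ * ((Γ.Δ ^ q)⁻¹ * x * Γ.Δ ^ q) ∈ Γ.pos := by
    rw [show ((a⁻¹ * Γ.Δ ^ q)⁻¹ * m)⁻¹ * ((Γ.Δ ^ q)⁻¹ * x * Γ.Δ ^ q)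
        = m⁻¹ * (a⁻¹ * Γ.Δ ^ q * ((Γ.Δ ^ q)⁻¹ * x * Γ.Δ ^ q)) from by group]
    exact hmCx
  have hetΔ : ((a⁻¹ * Γ.Δ ^ q)⁻¹ * m)⁻¹ * Γ.Δ ∈ Γ.pos := by
    rw [show ((a⁻¹ * Γ.Δ ^ q)⁻¹ * m)⁻¹ * Γ.Δ
        = m⁻¹ * (a⁻¹ * Γ.Δ ^ q * Γ.Δ) from by group]
    exact hmCΔ
  -- pull e back through τ_q : τ_{-q}(e) divides x and Δ, hence d
  have hteXmem : (Γ.Δ ^ q * ((a⁻¹ * Γ.Δ ^ q)⁻¹ * m) * (Γ.Δ ^ q)⁻¹) ∈ Γ.pos := by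
    rw [show Γ.Δ ^ q * ((a⁻¹ * Γ.Δ ^ q)⁻¹ * m) * (Γ.Δ ^ q)⁻¹
        = (Γ.Δ ^ (-q))⁻¹ * ((a⁻¹ * Γ.Δ ^ q)⁻¹ * m) * Γ.Δ ^ (-q) from by group]
    exact tau_zpow_mem Γ (-q) hCm
  have hteX : (Γ.Δ ^ q * ((a⁻¹ * Γ.Δ ^ q)⁻¹ * m) * (Γ.Δ ^ q)⁻¹)⁻¹ * x ∈ Γ.pos := by
    rw [show (Γ.Δ ^ q * ((a⁻¹ * Γ.Δ ^ q)⁻¹ * m) * (Γ.Δ ^ q)⁻¹)⁻¹ * x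
        = (Γ.Δ ^ (-q))⁻¹ * (((a⁻¹ * Γ.Δ ^ q)⁻¹ * m)⁻¹ * ((Γ.Δ ^ q)⁻¹ * x * Γ.Δ ^ q)) * Γ.Δ ^ (-q)
          from by group]
    exact tau_zpow_mem Γ (-q) hetx
  have hteΔ : (Γ.Δ ^ q * ((a⁻¹ * Γ.Δ ^ q)⁻¹ * m) * (Γ.Δ ^ q)⁻¹)⁻¹ * Γ.Δ ∈ Γ.pos := by
    rw [show (Γ.Δ ^ q * ((a⁻¹ * Γ.Δ ^ q)⁻¹ * m) * (Γ.Δ ^ q)⁻¹)⁻¹ * Γ.Δ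
        = (Γ.Δ ^ (-q))⁻¹ * (((a⁻¹ * Γ.Δ ^ q)⁻¹ * m)⁻¹ * Γ.Δ) * Γ.Δ ^ (-q) from by group]
    exact tau_zpow_mem Γ (-q) hetΔ
  have hted : (Γ.Δ ^ q * ((a⁻¹ * Γ.Δ ^ q)⁻¹ * m) * (Γ.Δ ^ q)⁻¹)⁻¹ * d ∈ Γ.pos :=
    huniv _ hteXmem hteX hteΔ
  -- hence e divides τ_q(d), so m divides C τ_q(d)
  have hetd : (((a⁻¹ * Γ.Δ ^ q)⁻¹ * m))⁻¹ * ((Γ.Δ ^ q)⁻¹ * d * Γ.Δ ^ q) ∈ Γ.pos := by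
    rw [show (((a⁻¹ * Γ.Δ ^ q)⁻¹ * m))⁻¹ * ((Γ.Δ ^ q)⁻¹ * d * Γ.Δ ^ q)
        = (Γ.Δ ^ q)⁻¹ * ((Γ.Δ ^ q * ((a⁻¹ * Γ.Δ ^ q)⁻¹ * m) * (Γ.Δ ^ q)⁻¹)⁻¹ * d) * Γ.Δ ^ q
          from by group]
    exact tau_zpow_mem Γ q hted
  -- assemble: d ≼ m ≼ C τ_q(d)
  have hfinal : (d⁻¹ * a * d)⁻¹ * Γ.Δ ^ q
      = (d⁻¹ * m) * ((((a⁻¹ * Γ.Δ ^ q)⁻¹ * m))⁻¹ * ((Γ.Δ ^ q)⁻¹ * d * Γ.Δ ^ q)) := by group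
  rw [hfinal]
  exact mul_mem hdm hetd

end Aux

namespace Aux

variable {G : Type*} [Group G]

/-- ℕ-indexed chain of simple conjugations inside the interval -/
def NChain (Γ : GarsideStructure G) {r : ℕ} (p q : Fin r → ℤ) (a c : Fin r → G) : Prop :=
  ∃ (l : ℕ) (w : ℕ → Fin r → G) (t : ℕ → G),
    w 0 = a ∧ w l = c ∧ (∀ i ≤ l, Γ.InInterval p q (w i)) ∧
    ∀ i < l, Γ.Simple (t i) ∧ ∀ j, w (i + 1) j = (t i)⁻¹ * w i j * (t i)

variable (Γ : GarsideStructure G) {r : ℕ} {p q : Fin r → ℤ}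

lemma NChain.refl {a : Fin r → G} (ha : Γ.InInterval p q a) : NChain Γ p q a a :=
  ⟨0, fun _ => a, fun _ => 1, rfl, rfl, fun _ _ => ha, fun i hi => absurd hi (by omega)⟩

lemma NChain.single {a c : Fin r → G} {s : G} (ha : Γ.InInterval p q a)
    (hs : Γ.Simple s) (hc : Γ.InInterval p q c) (hstep : ∀ j, c j = s⁻¹ * a j * s) :
    NChain Γ p q a c := by
  refine ⟨1, fun i => if i = 0 then a else c, fun _ => s, by simp, by simp, ?_, ?_⟩
  · intro i _
    by_cases h : i = 0 <;> simp [h, ha, hc]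
  · intro i hi
    have hi0 : i = 0 := by omega
    subst hi0
    exact ⟨hs, fun j => by simpa using hstep j⟩

lemma NChain.trans {a b c : Fin r → G} (h1 : NChain Γ p q a b) (h2 : NChain Γ p q b c) :
    NChain Γ p q a c := by
  obtain ⟨l₁, w₁, t₁, hw0, hwl, hint1, hstep1⟩ := h1
  obtain ⟨l₂, w₂, t₂, hv0, hvl, hint2, hstep2⟩ := h2
  refine ⟨l₁ + l₂, fun i => if i ≤ l₁ then w₁ i else w₂ (i - l₁),
    fun i => if i < l₁ then t₁ i else t₂ (i - l₁), by simp [hw0], ?_, ?_, ?_⟩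
  · dsimp only
    by_cases h : l₂ = 0
    · subst h
      simp only [Nat.add_zero, if_pos (le_refl l₁), hwl]
      rw [← hv0, ← hvl]
    · rw [if_neg (by omega)]
      simpa using hvl
  · intro i hi
    dsimp only
    by_cases h : i ≤ l₁
    · rw [if_pos h]; exact hint1 i h
    · rw [if_neg h]; exact hint2 (i - l₁) (by omega)
  · intro i hi
    dsimp only
    by_cases h : i < l₁
    · refine ⟨by rw [if_pos h]; exact (hstep1 i h).1, ?_⟩
      intro j
      rw [if_pos h, if_pos (by omega : i ≤ l₁)]
      by_cases h2 : i + 1 ≤ l₁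
      · rw [if_pos h2]; exact (hstep1 i h).2 j
      · have hil : i + 1 = l₁ := by omega
        rw [if_neg h2, hil]
        simp only [Nat.sub_self]
        rw [hv0, ← hwl, ← hil]
        exact (hstep1 i h).2 j
    · have h' : ¬ (i + 1 ≤ l₁) := by omega
      refine ⟨by rw [if_neg h]; exact (hstep2 (i - l₁) (by omega)).1, ?_⟩
      intro j
      rw [if_neg h, if_neg h']
      by_cases hil : i ≤ l₁
      · -- i = l₁
        have hi1 : i + 1 - l₁ = 1 := by omega
        have hi0 : i - l₁ = 0 := by omega
        rw [if_pos hil, hi1, hi0]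
        have hieq : i = l₁ := by omega
        have heq : w₁ i = w₂ 0 := by rw [hieq, hwl, hv0]
        rw [heq]
        exact (hstep2 0 (by omega)).2 j
      · rw [if_neg hil]
        have h3 : i + 1 - l₁ = (i - l₁) + 1 := by omega
        rw [h3]
        exact (hstep2 (i - l₁) (by omega)).2 j

/-- the positive-conjugator reachability lemma -/
lemma reach_pos : ∀ (n : ℕ) (x : G), x ∈ Γ.pos → len Γ x ≤ n →
    ∀ a c : Fin r → G, Γ.InInterval p q a → Γ.InInterval p q c →
    (∀ j, c j = x⁻¹ * a j * x) → NChain Γ p q a c := by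
  intro n
  induction n with
  | zero =>
      intro x hx hlen a c ha hc hconj
      have hx1 : x = 1 := by
        by_contra h
        have := one_le_len Γ hx h
        omega
      have : c = a := by
        funext j
        rw [hconj j, hx1]
        simp
      rw [this]
      exact NChain.refl Γ ha
  | succ n ih =>
      intro x hx hlen a c ha hc hconj
      by_cases hx1 : x = 1
      · have : c = a := by
          funext j
          rw [hconj j, hx1]; simp
        rw [this]
        exact NChain.refl Γ ha
      · obtain ⟨d, hgcd⟩ := exists_leftGcd Γ hx Γ.delta_mem
        obtain ⟨s, hsS, hs1, hsx⟩ := exists_simple_dvd Γ hx hx1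
        have hsd : s⁻¹ * d ∈ Γ.pos := hgcd.2.2.2 s hsS.1 hsx hsS.2
        have hd1 : d ≠ 1 := by
          intro h
          subst h
          have : s⁻¹ ∈ Γ.pos := by simpa using hsd
          exact hs1 (eq_one_of_inv_mem Γ hsS.1 this)
        have hd : d ∈ Γ.pos := hgcd.1
        have hdx : d⁻¹ * x ∈ Γ.pos := hgcd.2.1
        -- the intermediate tuple
        set b : Fin r → G := fun j => d⁻¹ * a j * d with hb
        have hbint : Γ.InInterval p q b := by
          intro j
          constructor
          · exact gcd_cond_inf Γ (p j) (ha j).1 hx hgcd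
              (by rw [show x⁻¹ * a j * x = c j from (hconj j).symm]; exact (hc j).1)
          · exact gcd_cond_sup Γ (q j) (ha j).2 hx hgcd
              (by rw [show x⁻¹ * a j * x = c j from (hconj j).symm]; exact (hc j).2)
        have hdsimple : Γ.Simple d := ⟨hd, hgcd.2.2.1⟩
        have hstep1 : NChain Γ p q a b :=
          NChain.single Γ ha hdsimple hbint (fun j => rfl)
        have hlen' : len Γ (d⁻¹ * x) ≤ n := by
          have := len_lt_of_dvd Γ hd hd1 hdx
          omega
        have hstep2 : NChain Γ p q b c := by
          apply ih (d⁻¹ * x) hdx hlen' b c hbint hc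
          intro j
          rw [hconj j, hb]
          group
        exact NChain.trans Γ hstep1 hstep2

end Aux

namespace Aux

variable {G : Type*} [Group G] (Γ : GarsideStructure G) {r : ℕ} {p q : Fin r → ℤ}

lemma nchain_to_fin {a c : Fin r → G} (h : NChain Γ p q a c) :
    ∃ (l : ℕ) (v : Fin (l + 1) → Fin r → G) (s : Fin l → G),
      v 0 = a ∧ v (Fin.last l) = c ∧
      (∀ i, Γ.InInterval p q (v i)) ∧
      (∀ i : Fin l, Γ.Simple (s i) ∧
        ∀ j, v i.succ j = (s i)⁻¹ * v i.castSucc j * (s i)) := by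
  obtain ⟨l, w, t, hw0, hwl, hint, hstep⟩ := h
  refine ⟨l, fun i => w i.val, fun i => t i.val, hw0, by simpa [Fin.val_last] using hwl, ?_, ?_⟩
  · intro i
    exact hint i.val (by omega)
  · intro i
    refine ⟨(hstep i.val i.isLt).1, ?_⟩
    intro j
    have := (hstep i.val i.isLt).2 j
    simpa [Fin.val_succ, Fin.coe_castSucc] using this

end Aux

/-- If `a, c ∈ [p,q]` are conjugate, then there is a chain `v₀ = a, v₁, …, v_l = c`
inside `[p,q]` in which each `vᵢ` is obtained from `vᵢ₋₁` by conjugating by a simple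
element. -/
theorem conjugate_chain_in_interval {G : Type*} [Group G] (Γ : GarsideStructure G)
    (r : ℕ) (p q : Fin r → ℤ) (a c : Fin r → G)
    (ha : Γ.InInterval p q a) (hc : Γ.InInterval p q c)
    (hconj : ∃ x : G, ∀ i, x⁻¹ * a i * x = c i) :
    ∃ (l : ℕ) (v : Fin (l + 1) → Fin r → G) (s : Fin l → G),
      v 0 = a ∧ v (Fin.last l) = c ∧
      (∀ i, Γ.InInterval p q (v i)) ∧
      (∀ i : Fin l, Γ.Simple (s i) ∧
        ∀ j, v i.succ j = (s i)⁻¹ * v i.castSucc j * (s i)) := by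
  obtain ⟨x, hx⟩ := hconj
  obtain ⟨u, hu, v0, hv0m, hxuv⟩ := Γ.fractions x
  obtain ⟨m, hm, hum, hvm, -⟩ := Γ.lcm_right u hu v0 hv0m
  obtain ⟨n, hn, hcen⟩ := Aux.delta_pow_central Γ
  obtain ⟨K₀, hK₀⟩ := Aux.dvd_delta_pow Γ hvm
  set K : ℕ := n * (K₀ + 1) with hK
  have hKK : K₀ ≤ K := by
    calc K₀ ≤ K₀ + 1 := by omega
      _ ≤ n * (K₀ + 1) := Nat.le_mul_of_pos_left _ hn
  have hβ : (v0⁻¹ * m)⁻¹ * Γ.Δ ^ K ∈ Γ.pos := Aux.dvd_delta_pow_mono Γ hK₀ hKK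
  have hy : (u⁻¹ * m) * ((v0⁻¹ * m)⁻¹ * Γ.Δ ^ K) ∈ Γ.pos := mul_mem hum hβ
  have hcenK : ∀ g : G, Γ.Δ ^ K * g = g * Γ.Δ ^ K := by
    intro g
    have h1 : Commute (Γ.Δ ^ n) g := hcen g
    have h2 : Commute ((Γ.Δ ^ n) ^ (K₀ + 1)) g := h1.pow_left (K₀ + 1)
    rw [← pow_mul] at h2
    exact h2
  have hconj' : ∀ j, c j =
      ((u⁻¹ * m) * ((v0⁻¹ * m)⁻¹ * Γ.Δ ^ K))⁻¹ * a j * ((u⁻¹ * m) * ((v0⁻¹ * m)⁻¹ * Γ.Δ ^ K)) := by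
    intro j
    have hid : ((u⁻¹ * m) * ((v0⁻¹ * m)⁻¹ * Γ.Δ ^ K))⁻¹ * a j * ((u⁻¹ * m) * ((v0⁻¹ * m)⁻¹ * Γ.Δ ^ K))
        = (Γ.Δ ^ K)⁻¹ * ((u⁻¹ * v0)⁻¹ * a j * (u⁻¹ * v0)) * Γ.Δ ^ K := by group
    rw [hid, ← hxuv, hx j, mul_assoc, ← hcenK (c j), ← mul_assoc]
    simp
  exact Aux.nchain_to_fin Γ
    (Aux.reach_pos Γ (Aux.len Γ ((u⁻¹ * m) * ((v0⁻¹ * m)⁻¹ * Γ.Δ ^ K))) _ hy le_rfl a c ha hc hconj')
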